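/- There exists a constant α > 0 and a family of total unique search problems {W_N ⊆ {0,1,*}^{m(N)}} for N = 1, 2, 3, ..., with m(N) bounded by a polynomial in N, such that for all sufficiently large N: D(W_N) ≥ s(W_N)^{1+α} and s(W_N) ≥ N. -/

import Mathlib

set_option linter.unusedSectionVars false
set_option linter.unnecessarySimpa false
set_option linter.unreachableTactic false
set_option linter.unusedTactic false



/-- A deterministic adaptive decision tree over inputs `x : Fin n → Bool`
with outputs in `β`. -/
inductive DTree (n : ℕ) (β : Type) : Type where
  | leaf : β → DTree n β
  | node : Fin n → DTree n β → DTree n β → DTree n β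

namespace DTree

/-- Evaluate a decision tree on an input. -/
def eval {n : ℕ} {β : Type} : DTree n β → (Fin n → Bool) → β
  | .leaf b, _ => b
  | .node i t0 t1, x => if x i then eval t1 x else eval t0 x

/-- Depth of a decision tree: the maximum number of queries on a root-to-leaf path. -/
def depth {n : ℕ} {β : Type} : DTree n β → ℕ
  | .leaf _ => 0
  | .node _ t0 t1 => 1 + max (depth t0) (depth t1)

end DTree

/-- A partial assignment (witness/clause) `w ∈ {0,1,*}^n` agrees with `x ∈ {0,1}^n`
if every 0/1 entry of `w` matches `x`. -/
def Agrees {n : ℕ} (w : Fin n → Option Bool) (x : Fin n → Bool) : Prop :=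
  ∀ (i : Fin n) (b : Bool), w i = some b → x i = b

/-- The number of 0/1 (non-`*`) entries of a witness. -/
def wSize {n : ℕ} (w : Fin n → Option Bool) : ℕ :=
  (Finset.univ.filter (fun i : Fin n => (w i).isSome)).card

/-- A decision tree `T` (outputting `some w'` or `none` for 'no match') solves the
search problem `W`: on inputs agreeing with some witness it outputs a witness of `W`
agreeing with the input, and otherwise it outputs `none`. -/
def Solves {n : ℕ} (T : DTree n (Option (Fin n → Option Bool)))
    (W : Set (Fin n → Option Bool)) : Prop :=
  ∀ x : Fin n → Bool,
    ((∃ w ∈ W, Agrees w x) → ∃ w' ∈ W, T.eval x = some w' ∧ Agrees w' x) ∧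
    ((¬ ∃ w ∈ W, Agrees w x) → T.eval x = none)

/-- `s(W)`: the maximum number of 0/1 entries in any witness of `W`. -/
noncomputable def sW {n : ℕ} (W : Set (Fin n → Option Bool)) : ℕ :=
  sSup (wSize '' W)

/-- `D(W)`: the minimum depth of a decision tree solving the search problem `W`. -/
noncomputable def DW {n : ℕ} (W : Set (Fin n → Option Bool)) : ℕ :=
  sInf {d | ∃ T : DTree n (Option (Fin n → Option Bool)), T.depth ≤ d ∧ Solves T W}

/-- `W` is a total search problem: every input agrees with some witness. -/
def TotalSP {n : ℕ} (W : Set (Fin n → Option Bool)) : Prop :=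
  ∀ x : Fin n → Bool, ∃ w ∈ W, Agrees w x

/-- `W` is a unique search problem: every input agrees with at most one witness. -/
def UniqueSP {n : ℕ} (W : Set (Fin n → Option Bool)) : Prop :=
  ∀ x : Fin n → Bool, ∀ w ∈ W, ∀ w' ∈ W, Agrees w x → Agrees w' x → w = w'

/-! Abstract search-problem machinery over an arbitrary finite index type. -/

section Abstract
variable {ι : Type} [DecidableEq ι] [Fintype ι]

def AAgrees (w : ι → Option Bool) (x : ι → Bool) : Prop :=
  ∀ (i : ι) (b : Bool), w i = some b → x i = b

instance (w : ι → Option Bool) (x : ι → Bool) : Decidable (AAgrees w x) := by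
  unfold AAgrees; infer_instance

lemma aagrees_getD (w : ι → Option Bool) : AAgrees w (fun i => (w i).getD false) := by
  intro i b h; simp [h]

def NonconstOn (ρ : ι → Option Bool) (f : (ι → Bool) → Bool) : Prop :=
  ∃ x y, AAgrees ρ x ∧ AAgrees ρ y ∧ f x ≠ f y

instance (ρ : ι → Option Bool) (f : (ι → Bool) → Bool) : Decidable (NonconstOn ρ f) := by
  unfold NonconstOn; infer_instance

lemma attains {ρ : ι → Option Bool} {f : (ι → Bool) → Bool} (h : NonconstOn ρ f) (v : Bool) :
    ∃ p, AAgrees ρ p ∧ f p = v := by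
  obtain ⟨x, y, hx, hy, hne⟩ := h
  by_cases hv : f x = v
  · exact ⟨x, hx, hv⟩
  · refine ⟨y, hy, ?_⟩
    cases hfx : f x <;> cases hfy : f y <;> cases v <;> simp_all

/-- The adversary hardness predicate: `Hard f k ρ` says an adversary can survive `k`
further queries keeping `f` non-constant on the restriction `ρ`. -/
def Hard (f : (ι → Bool) → Bool) : ℕ → (ι → Option Bool) → Prop
  | 0, ρ => NonconstOn ρ f
  | (k+1), ρ => NonconstOn ρ f ∧
      ∀ i, ρ i = none → ∃ c : Bool, Hard f k (Function.update ρ i (some c))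

instance hardDec (f : (ι → Bool) → Bool) : ∀ (k : ℕ) (ρ : ι → Option Bool),
    Decidable (Hard f k ρ)
  | 0, ρ => by unfold Hard; infer_instance
  | (k+1), ρ => by
      unfold Hard
      have : ∀ (ρ' : ι → Option Bool), Decidable (Hard f k ρ') := hardDec f k
      infer_instance

lemma hard_nonconst {f : (ι → Bool) → Bool} {k : ℕ} {ρ : ι → Option Bool}
    (h : Hard f k ρ) : NonconstOn ρ f := by
  cases k with
  | zero => exact h
  | succ k => exact h.1

/-- Labeled-partition predicates. -/
def ATotal (W : Set (Bool × (ι → Option Bool))) : Prop :=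
  ∀ x : ι → Bool, ∃ p ∈ W, AAgrees p.2 x

def AUnique (W : Set (Bool × (ι → Option Bool))) : Prop :=
  ∀ x : ι → Bool, ∀ p ∈ W, ∀ q ∈ W, AAgrees p.2 x → AAgrees q.2 x → p = q

def Computes (W : Set (Bool × (ι → Option Bool))) (f : (ι → Bool) → Bool) : Prop :=
  ∀ p ∈ W, ∀ x : ι → Bool, AAgrees p.2 x → f x = p.1

def ASize (w : ι → Option Bool) : ℕ :=
  (Finset.univ.filter (fun i : ι => (w i).isSome)).card

end Abstract

/-! The concrete base partition on `Fin 4`. -/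

def fB (x : Fin 4 → Bool) : Bool :=
  !x 0 && ((!x 1 && !x 2) || (x 1 && !x 3) || (x 2 && x 3))

def baseList : List (Bool × (Fin 4 → Option Bool)) :=
  [ (true,  ![some false, some false, some false, none]),
    (false, ![some true,  some false, some false, none]),
    (true,  ![some false, some true,  none, some false]),
    (false, ![some true,  some true,  none, some false]),
    (false, ![none, some false, some true,  some false]),
    (false, ![none, some true,  some false, some true ]),
    (true,  ![some false, none, some true,  some true ]),
    (false, ![some true,  none, some true,  some true ]) ]

def baseW : Set (Bool × (Fin 4 → Option Bool)) := {p | p ∈ baseList}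

lemma mem_baseW {p : Bool × (Fin 4 → Option Bool)} : p ∈ baseW ↔ p ∈ baseList := Iff.rfl

set_option maxRecDepth 4000

lemma bTotal : ATotal baseW := by
  have h : ∀ x : Fin 4 → Bool, ∃ p ∈ baseList, AAgrees p.2 x := by decide
  exact h

lemma bUnique : AUnique baseW := by
  have h : ∀ x : Fin 4 → Bool, ∀ p ∈ baseList, ∀ q ∈ baseList,
      AAgrees p.2 x → AAgrees q.2 x → p = q := by decide
  exact h

lemma bComputes : Computes baseW fB := by
  have h : ∀ p ∈ baseList, ∀ x : Fin 4 → Bool, AAgrees p.2 x → fB x = p.1 := by decide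
  exact h

lemma bSize : ∀ p ∈ baseList, ASize p.2 = 3 := by decide

lemma bBoth : ∀ b : Bool, ∃ p ∈ baseList, p.1 = b ∧ ASize p.2 = 3 := by decide

lemma bHard : Hard fB 3 (fun _ => none) := by decide

/-! Decision-tree lower bound from the hardness predicate. -/

lemma agrees_of_update {m : ℕ} {ρ : Fin m → Option Bool} {i : Fin m} {c : Bool}
    (hi : ρ i = none) {x : Fin m → Bool}
    (h : AAgrees (Function.update ρ i (some c)) x) : AAgrees ρ x ∧ x i = c := by
  constructor
  · intro j b hj
    have hji : j ≠ i := by rintro rfl; rw [hi] at hj; simp at hj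
    exact h j b (by rw [Function.update_apply, if_neg hji]; exact hj)
  · exact h i c (by rw [Function.update_apply, if_pos rfl])

lemma treeLB {m : ℕ} {β : Type} (f : (Fin m → Bool) → Bool) (out : β → Bool) :
    ∀ (T : DTree m β) (k : ℕ) (ρ : Fin m → Option Bool),
      Hard f k ρ → (∀ x, AAgrees ρ x → out (T.eval x) = f x) → k + 1 ≤ T.depth := by
  intro T
  induction T with
  | leaf c =>
    intro k ρ hH hev
    exfalso
    obtain ⟨x, y, hx, hy, hne⟩ := hard_nonconst hH
    have h1 := hev x hx
    have h2 := hev y hy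
    simp only [DTree.eval] at h1 h2
    exact hne (h1 ▸ h2 ▸ rfl)
  | node i t0 t1 ih0 ih1 =>
    intro k ρ hH hev
    simp only [DTree.depth]
    cases hρ : ρ i with
    | some b =>
      cases b with
      | false =>
        have := ih0 k ρ hH (fun x hx => by
          have hxi : x i = false := hx i false hρ
          have := hev x hx
          simpa [DTree.eval, hxi] using this)
        omega
      | true =>
        have := ih1 k ρ hH (fun x hx => by
          have hxi : x i = true := hx i true hρ
          have := hev x hx
          simpa [DTree.eval, hxi] using this)
        omega
    | none =>
      cases k with
      | zero => omega
      | succ k' =>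
        obtain ⟨-, hstep⟩ := hH
        obtain ⟨c, hc⟩ := hstep i hρ
        cases c with
        | false =>
          have := ih0 k' _ hc (fun x hx => by
            obtain ⟨hag, hxi⟩ := agrees_of_update hρ hx
            have := hev x hag
            simpa [DTree.eval, hxi] using this)
          omega
        | true =>
          have := ih1 k' _ hc (fun x hx => by
            obtain ⟨hag, hxi⟩ := agrees_of_update hρ hx
            have := hev x hag
            simpa [DTree.eval, hxi] using this)
          omega

/-! A full decision tree solving any search problem, for nonemptiness of the `DW` set. -/

def fullT {m : ℕ} {β : Type} : List (Fin m) → ((Fin m → Bool) → β) → DTree m β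
  | [], G => .leaf (G fun _ => false)
  | i :: l, G => .node i (fullT l (fun x => G (Function.update x i false)))
                         (fullT l (fun x => G (Function.update x i true)))

lemma fullT_depth {m : ℕ} {β : Type} :
    ∀ (l : List (Fin m)) (G : (Fin m → Bool) → β), (fullT l G).depth ≤ l.length := by
  intro l
  induction l with
  | nil => intro G; simp [fullT, DTree.depth]
  | cons i l ih =>
    intro G
    simp only [fullT, DTree.depth, List.length_cons]
    have h0 := ih (fun x => G (Function.update x i false))
    have h1 := ih (fun x => G (Function.update x i true))
    omega

lemma fullT_eval {m : ℕ} {β : Type} :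
    ∀ (l : List (Fin m)) (G : (Fin m → Bool) → β) (x : Fin m → Bool),
      (∀ y z : Fin m → Bool, (∀ j ∈ l, y j = z j) → G y = G z) →
      (fullT l G).eval x = G x := by
  intro l
  induction l with
  | nil =>
    intro G x hG
    exact hG _ _ (by simp)
  | cons i l ih =>
    intro G x hG
    have key : ∀ c : Bool, x i = c →
        (fullT l (fun y => G (Function.update y i c))).eval x = G x := by
      intro c hc
      have := ih (fun y => G (Function.update y i c)) x (by
        intro y z hyz
        apply hG
        intro j hj
        by_cases hji : j = i
        · subst hji; simp
        · simp only [Function.update_apply, if_neg hji]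
          have hj' : j ∈ l := by
            rcases List.mem_cons.mp hj with h | h
            · exact absurd h hji
            · exact h
          exact hyz j hj')
      rw [this]
      apply hG
      intro j hj
      by_cases hji : j = i
      · subst hji; simp [hc]
      · simp [Function.update_apply, hji]
    cases hc : x i with
    | false =>
      have := key false hc
      simpa [fullT, DTree.eval, hc] using this
    | true =>
      have := key true hc
      simpa [fullT, DTree.eval, hc] using this

lemma exists_solver {m : ℕ} (W : Set (Fin m → Option Bool)) :
    ∃ T : DTree m (Option (Fin m → Option Bool)), T.depth ≤ m ∧ Solves T W := by
  classical
  set G : (Fin m → Bool) → Option (Fin m → Option Bool) :=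
    fun x => if h : ∃ w ∈ W, Agrees w x then some h.choose else none with hG
  have hGconst : ∀ y z : Fin m → Bool, (∀ j ∈ List.finRange m, y j = z j) → G y = G z := by
    intro y z h
    have : y = z := funext fun j => h j (List.mem_finRange j)
    rw [this]
  refine ⟨fullT (List.finRange m) G, ?_, ?_⟩
  · have := fullT_depth (List.finRange m) G
    simpa using this
  · intro x
    have hev : (fullT (List.finRange m) G).eval x = G x := fullT_eval _ _ _ hGconst
    constructor
    · intro hx
      rw [hev, hG]
      simp only [dif_pos hx]
      obtain ⟨hw, hag⟩ := hx.choose_spec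
      exact ⟨hx.choose, hw, rfl, hag⟩
    · intro hx
      rw [hev, hG]
      simp only [dif_neg hx]

/-! Composition of the base partition with an arbitrary labeled partition. -/

section Comp
variable {κ : Type} [DecidableEq κ] [Fintype κ]

def compW (W : Set (Bool × (κ → Option Bool))) : Set (Bool × (Fin 4 × κ → Option Bool)) :=
  { q | ∃ (A : Fin 4 → Option Bool) (C : Fin 4 → κ → Option Bool),
      (q.1, A) ∈ baseW ∧
      (∀ i a, A i = some a → (a, C i) ∈ W) ∧
      (∀ i, A i = none → C i = fun _ => none) ∧
      q.2 = fun p => C p.1 p.2 }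

lemma comp_total {W : Set (Bool × (κ → Option Bool))} (hT : ATotal W) :
    ATotal (compW W) := by
  intro x
  choose p hpW hpA using fun i : Fin 4 => hT (fun j => x (i, j))
  obtain ⟨q, hq, hqA⟩ := bTotal (fun i => (p i).1)
  set C : Fin 4 → κ → Option Bool :=
    fun i => if (q.2 i).isSome then (p i).2 else fun _ => none with hC
  refine ⟨(q.1, fun pr => C pr.1 pr.2), ⟨q.2, C, ?_, ?_, ?_, rfl⟩, ?_⟩
  · exact hq
  · intro i a ha
    have hy : (p i).1 = a := hqA i a ha
    have hCi : C i = (p i).2 := by rw [hC]; simp [ha]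
    rw [hCi, ← hy]
    exact hpW i
  · intro i ha; rw [hC]; simp [ha]
  · intro pr b hb
    have hb' : C pr.1 pr.2 = some b := hb
    by_cases hs : (q.2 pr.1).isSome
    · have hCi : C pr.1 = (p pr.1).2 := by rw [hC]; simp [hs]
      rw [hCi] at hb'
      exact hpA pr.1 pr.2 b hb'
    · have hCi : C pr.1 = fun _ => none := by rw [hC]; simp [hs]
      rw [hCi] at hb'; simp at hb'

lemma comp_unique {W : Set (Bool × (κ → Option Bool))} (hT : ATotal W) (hU : AUnique W) :
    AUnique (compW W) := by
  intro x pq hpq pq' hpq' hag hag'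
  obtain ⟨A, C, hA, hC, hCn, hw⟩ := hpq
  obtain ⟨A', C', hA', hC', hCn', hw'⟩ := hpq'
  choose pc hpcW hpcA using fun i : Fin 4 => hT (fun j => x (i, j))
  have hagC : AAgrees (fun pr : Fin 4 × κ => C pr.1 pr.2) x := by rw [← hw]; exact hag
  have hagC' : AAgrees (fun pr : Fin 4 × κ => C' pr.1 pr.2) x := by rw [← hw']; exact hag'
  have key : ∀ (B : Fin 4 → Option Bool) (D : Fin 4 → κ → Option Bool),
      (∀ i a, B i = some a → (a, D i) ∈ W) →
      AAgrees (fun pr : Fin 4 × κ => D pr.1 pr.2) x →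
      ∀ i a, B i = some a → (a, D i) = pc i := by
    intro B D hD hagD i a ha
    exact hU (fun j => x (i, j)) (a, D i) (hD i a ha) (pc i) (hpcW i)
      (fun j b hb => hagD (i, j) b hb) (hpcA i)
  have hAy : AAgrees A (fun i => (pc i).1) := by
    intro i a ha
    have h := congrArg Prod.fst (key A C hC hagC i a ha)
    exact h.symm
  have hA'y : AAgrees A' (fun i => (pc i).1) := by
    intro i a ha
    have h := congrArg Prod.fst (key A' C' hC' hagC' i a ha)
    exact h.symm
  have hbase := bUnique (fun i => (pc i).1) (pq.1, A) hA (pq'.1, A') hA' hAy hA'y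
  obtain ⟨hb1, hAA⟩ := Prod.mk.inj hbase
  have hCC : C = C' := by
    funext i
    cases hAi : A i with
    | some a =>
      have h1 := key A C hC hagC i a hAi
      have h2 := key A' C' hC' hagC' i a (by rw [← hAA]; exact hAi)
      exact congrArg Prod.snd (h1.trans h2.symm)
    | none =>
      rw [hCn i hAi, hCn' i (by rw [← hAA]; exact hAi)]
  have h2 : pq.2 = pq'.2 := by rw [hw, hw', hCC]
  exact Prod.ext hb1 h2

lemma comp_computes {W : Set (Bool × (κ → Option Bool))} {f : (κ → Bool) → Bool}
    (hC : Computes W f) :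
    Computes (compW W) (fun x => fB (fun i => f (fun j => x (i, j)))) := by
  intro pq hpq x hag
  obtain ⟨A, Cc, hA, hCc, hCn, hw⟩ := hpq
  have hag' : AAgrees (fun pr : Fin 4 × κ => Cc pr.1 pr.2) x := by rw [← hw]; exact hag
  have hAy : AAgrees A (fun i => f (fun j => x (i, j))) := by
    intro i a ha
    exact hC (a, Cc i) (hCc i a ha) (fun j => x (i, j)) (fun j b hb => hag' (i, j) b hb)
  exact bComputes (pq.1, A) hA _ hAy

lemma ASize_prod (C : Fin 4 → κ → Option Bool) :
    ASize (fun p : Fin 4 × κ => C p.1 p.2) = ∑ i : Fin 4, ASize (C i) := by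
  unfold ASize
  rw [Finset.card_eq_sum_card_fiberwise
    (f := Prod.fst) (t := (Finset.univ : Finset (Fin 4))) (fun a _ => Finset.mem_univ _)]
  refine Finset.sum_congr rfl fun i _ => ?_
  rw [Finset.filter_filter]
  refine Finset.card_bij' (fun p _ => p.2) (fun j _ => (i, j)) ?_ ?_ ?_ ?_
  · intro p hp
    simp only [Finset.mem_filter, Finset.mem_univ, true_and] at hp ⊢
    rw [← hp.2]; exact hp.1
  · intro j hj
    simp only [Finset.mem_filter, Finset.mem_univ, true_and] at hj ⊢
    simp [hj]
  · intro p hp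
    simp only [Finset.mem_filter, Finset.mem_univ, true_and] at hp
    exact Prod.ext hp.2.symm rfl
  · intro j _; rfl

lemma ASize_none : ASize (fun _ : κ => (none : Option Bool)) = 0 := by
  unfold ASize; simp

lemma comp_size_le {W : Set (Bool × (κ → Option Bool))} {S : ℕ}
    (hS : ∀ p ∈ W, ASize p.2 ≤ S) :
    ∀ q ∈ compW W, ASize q.2 ≤ 3 * S := by
  intro q hq
  obtain ⟨A, C, hA, hC, hCn, hw⟩ := hq
  rw [hw, ASize_prod]
  have hterm : ∀ i : Fin 4, ASize (C i) ≤ (if (A i).isSome then S else 0) := by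
    intro i
    cases hAi : A i with
    | some a => simpa [hAi] using hS (a, C i) (hC i a hAi)
    | none => simp [hAi, hCn i hAi, ASize_none]
  calc ∑ i : Fin 4, ASize (C i)
      ≤ ∑ i : Fin 4, (if (A i).isSome then S else 0) :=
        Finset.sum_le_sum (fun i _ => hterm i)
    _ = ∑ i ∈ Finset.univ.filter (fun i : Fin 4 => (A i).isSome), S := by
        rw [Finset.sum_filter]
    _ = (Finset.univ.filter (fun i : Fin 4 => (A i).isSome)).card * S := by
        rw [Finset.sum_const, smul_eq_mul]
    _ ≤ 3 * S := by
        have h3 : (Finset.univ.filter (fun i : Fin 4 => (A i).isSome)).card = 3 :=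
          bSize (q.1, A) hA
        rw [h3]

lemma comp_heavy {W : Set (Bool × (κ → Option Bool))} {L : ℕ}
    (hH : ∀ b : Bool, ∃ p ∈ W, p.1 = b ∧ L ≤ ASize p.2) :
    ∀ b : Bool, ∃ q ∈ compW W, q.1 = b ∧ 2 * L ≤ ASize q.2 := by
  intro b
  obtain ⟨pb, hpb, hpb1, hpbS⟩ := bBoth b
  choose pv hvW hv1 hvS using hH
  set C : Fin 4 → κ → Option Bool :=
    fun i => if h : (pb.2 i).isSome then (pv ((pb.2 i).get h)).2 else fun _ => none with hC
  refine ⟨(b, fun pr => C pr.1 pr.2), ⟨pb.2, C, ?_, ?_, ?_, rfl⟩, rfl, ?_⟩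
  · rw [← hpb1]; exact hpb
  · intro i a ha
    have hCi : C i = (pv a).2 := by rw [hC]; simp [ha]
    have hpa : (a, (pv a).2) = pv a := Prod.ext (hv1 a).symm rfl
    rw [hCi, hpa]
    exact hvW a
  · intro i ha; rw [hC]; simp [ha]
  · show 2 * L ≤ ASize (fun pr : Fin 4 × κ => C pr.1 pr.2)
    rw [ASize_prod]
    have hmem : ∀ i ∈ Finset.univ.filter (fun i : Fin 4 => (pb.2 i).isSome),
        L ≤ ASize (C i) := by
      intro i hi
      simp only [Finset.mem_filter, Finset.mem_univ, true_and] at hi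
      obtain ⟨a, ha⟩ := Option.isSome_iff_exists.mp hi
      have hCi : C i = (pv a).2 := by rw [hC]; simp [ha]
      rw [hCi]; exact hvS a
    have hsub : ∑ i ∈ Finset.univ.filter (fun i : Fin 4 => (pb.2 i).isSome), ASize (C i)
        ≤ ∑ i : Fin 4, ASize (C i) :=
      Finset.sum_le_sum_of_subset (Finset.filter_subset _ _)
    have hlow := Finset.card_nsmul_le_sum
      (Finset.univ.filter (fun i : Fin 4 => (pb.2 i).isSome)) (fun i => ASize (C i)) L hmem
    have hcard : (Finset.univ.filter (fun i : Fin 4 => (pb.2 i).isSome)).card = 3 := hpbS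
    rw [hcard, smul_eq_mul] at hlow
    omega

end Comp

/-! Hardness composes. -/

section CompHard
variable {κ : Type} [DecidableEq κ] [Fintype κ]

def Fcomp (f : (κ → Bool) → Bool) : (Fin 4 × κ → Bool) → Bool :=
  fun x => fB (fun i => f (fun j => x (i, j)))

lemma R_update (ρ : Fin 4 → κ → Option Bool) (i : Fin 4) (j : κ) (c : Option Bool) :
    (fun p : Fin 4 × κ => Function.update ρ i (Function.update (ρ i) j c) p.1 p.2)
      = Function.update (fun p : Fin 4 × κ => ρ p.1 p.2) (i, j) c := by
  funext q
  rcases q with ⟨i', j'⟩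
  by_cases h1 : i' = i
  · subst h1
    by_cases h2 : j' = j
    · subst h2; simp
    · simp [Function.update_apply, h2, Prod.ext_iff]
  · simp [Function.update_apply, h1, Prod.ext_iff]

lemma filter_update_none (kap : Fin 4 → Option Bool) (i : Fin 4) (v : Bool) :
    Finset.univ.filter (fun i' => Function.update kap i (some v) i' = none)
      = (Finset.univ.filter (fun i' => kap i' = none)).erase i := by
  ext i'
  simp only [Finset.mem_filter, Finset.mem_erase, Finset.mem_univ, true_and,
    Function.update_apply]
  by_cases h : i' = i <;> simp [h]

lemma build_point (f : (κ → Bool) → Bool) (kap : Fin 4 → Option Bool)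
    (ρ : Fin 4 → κ → Option Bool) (bu : Fin 4 → ℕ) (pt : Fin 4 → κ → Bool)
    (hun : ∀ i, kap i = none → Hard f (bu i) (ρ i))
    (hcom : ∀ i v, kap i = some v → AAgrees (ρ i) (pt i) ∧ f (pt i) = v)
    (y : Fin 4 → Bool) (hy : AAgrees kap y) :
    ∃ x : Fin 4 × κ → Bool,
      AAgrees (fun p : Fin 4 × κ => ρ p.1 p.2) x ∧ (fun i => f (fun j => x (i, j))) = y := by
  have hpick : ∀ i : Fin 4, ∃ p : κ → Bool, AAgrees (ρ i) p ∧ f p = y i := by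
    intro i
    cases hk : kap i with
    | some v =>
      obtain ⟨h1, h2⟩ := hcom i v hk
      exact ⟨pt i, h1, by rw [h2]; exact (hy i v hk).symm⟩
    | none => exact attains (hard_nonconst (hun i hk)) (y i)
  choose p hp1 hp2 using hpick
  refine ⟨fun q => p q.1 q.2, ?_, ?_⟩
  · intro q b hb; exact hp1 q.1 q.2 b hb
  · funext i; exact hp2 i

lemma comp_nonconst (f : (κ → Bool) → Bool) {a : ℕ} (kap : Fin 4 → Option Bool)
    (ρ : Fin 4 → κ → Option Bool) (bu : Fin 4 → ℕ) (pt : Fin 4 → κ → Bool)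
    (ha : Hard fB a kap)
    (hun : ∀ i, kap i = none → Hard f (bu i) (ρ i))
    (hcom : ∀ i v, kap i = some v → AAgrees (ρ i) (pt i) ∧ f (pt i) = v) :
    NonconstOn (fun p : Fin 4 × κ => ρ p.1 p.2) (Fcomp f) := by
  obtain ⟨y0, y1, hy0, hy1, hne⟩ := hard_nonconst ha
  obtain ⟨x0, hx0, hfx0⟩ := build_point f kap ρ bu pt hun hcom y0 hy0
  obtain ⟨x1, hx1, hfx1⟩ := build_point f kap ρ bu pt hun hcom y1 hy1
  refine ⟨x0, x1, hx0, hx1, ?_⟩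
  show fB (fun i => f (fun j => x0 (i, j))) ≠ fB (fun i => f (fun j => x1 (i, j)))
  rw [hfx0, hfx1]; exact hne

lemma hardCompose (f : (κ → Bool) → Bool) (b : ℕ) :
    ∀ (M a : ℕ) (kap : Fin 4 → Option Bool) (ρ : Fin 4 → κ → Option Bool)
      (bu : Fin 4 → ℕ) (pt : Fin 4 → κ → Bool),
      Hard fB a kap →
      (∀ i, kap i = none → Hard f (bu i) (ρ i)) →
      (∀ i, kap i = none → bu i ≤ b) →
      (∀ i v, kap i = some v → AAgrees (ρ i) (pt i) ∧ f (pt i) = v) →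
      M + (Finset.univ.filter (fun i => kap i = none)).card * b
        ≤ a + (a + 1) * b + ∑ i ∈ Finset.univ.filter (fun i => kap i = none), bu i →
      Hard (Fcomp f) M (fun p : Fin 4 × κ => ρ p.1 p.2) := by
  intro M
  induction M with
  | zero =>
    intro a kap ρ bu pt ha hun hble hcom _
    exact comp_nonconst f kap ρ bu pt ha hun hcom
  | succ M ih =>
    intro a kap ρ bu pt ha hun hble hcom hineq
    refine ⟨comp_nonconst f kap ρ bu pt ha hun hcom, ?_⟩
    rintro ⟨i, j⟩ hnone
    have hnone' : ρ i j = none := hnone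
    cases hk : kap i with
    | some v =>
      refine ⟨pt i j, ?_⟩
      rw [← R_update]
      refine ih a kap (Function.update ρ i (Function.update (ρ i) j (some (pt i j))))
        bu pt ha ?_ hble ?_ ?_
      · intro i' h'
        have hii : i' ≠ i := by
          rintro rfl; rw [hk] at h'; simp at h'
        rw [Function.update_of_ne hii]
        exact hun i' h'
      · intro i' v' h'
        by_cases hii : i' = i
        · subst hii
          rw [hk] at h'
          have hvv : v' = v := (Option.some.inj h').symm
          subst hvv
          obtain ⟨hag, hfv⟩ := hcom _ _ hk
          rw [Function.update_self]
          refine ⟨?_, ?_⟩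
          · intro jj bb hbb
            by_cases hjj : jj = j
            · subst hjj
              rw [Function.update_self] at hbb
              exact Option.some.inj hbb
            · rw [Function.update_of_ne hjj] at hbb
              exact hag jj bb hbb
          · exact hfv
        · rw [Function.update_of_ne hii]
          exact hcom i' v' h'
      · set P := (Finset.univ.filter (fun i' => kap i' = none)).card * b with hP
        set Q := (a + 1) * b with hQ
        set Sg := ∑ i' ∈ Finset.univ.filter (fun i' => kap i' = none), bu i' with hS
        omega
    | none =>
      have hbH := hun i hk
      have hmem : i ∈ Finset.univ.filter (fun i' => kap i' = none) := by
        simp [hk]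
      cases hbu : bu i with
      | succ b' =>
        rw [hbu] at hbH
        obtain ⟨-, hstep⟩ := hbH
        obtain ⟨c, hc⟩ := hstep j hnone'
        refine ⟨c, ?_⟩
        rw [← R_update]
        refine ih a kap (Function.update ρ i (Function.update (ρ i) j (some c)))
          (Function.update bu i b') pt ha ?_ ?_ ?_ ?_
        · intro i' h'
          by_cases hii : i' = i
          · subst hii
            rw [Function.update_self, Function.update_self]
            exact hc
          · rw [Function.update_of_ne hii, Function.update_of_ne hii]
            exact hun i' h'
        · intro i' h'
          by_cases hii : i' = i
          · subst hii
            rw [Function.update_self]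
            have := hble i' hk
            omega
          · rw [Function.update_of_ne hii]
            exact hble i' h'
        · intro i' v' h'
          have hii : i' ≠ i := by
            rintro rfl; rw [hk] at h'; simp at h'
          rw [Function.update_of_ne hii]
          exact hcom i' v' h'
        · rw [Finset.sum_update_of_mem hmem, Finset.sdiff_singleton_eq_erase]
          have hsum := Finset.add_sum_erase _ bu hmem
          rw [hbu] at hsum
          set P := (Finset.univ.filter (fun i' => kap i' = none)).card * b with hP
          set Q := (a + 1) * b with hQ
          set Se := ∑ i' ∈ (Finset.univ.filter (fun i' => kap i' = none)).erase i, bu i' with hSe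
          set Sf := ∑ i' ∈ Finset.univ.filter (fun i' => kap i' = none), bu i' with hSf
          omega
      | zero =>
        cases a with
        | zero =>
          exfalso
          have hcard : 1 ≤ (Finset.univ.filter (fun i' : Fin 4 => kap i' = none)).card :=
            Finset.card_pos.mpr ⟨i, hmem⟩
          have hsum := Finset.add_sum_erase _ bu hmem
          have herase : ∑ i' ∈ (Finset.univ.filter (fun i' => kap i' = none)).erase i, bu i'
              ≤ ((Finset.univ.filter (fun i' : Fin 4 => kap i' = none)).card - 1) * b := by
            have hb : ∀ i' ∈ (Finset.univ.filter (fun i' : Fin 4 => kap i' = none)).erase i,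
                bu i' ≤ b := by
              intro i' hi'
              have : i' ∈ Finset.univ.filter (fun i' : Fin 4 => kap i' = none) :=
                Finset.mem_of_mem_erase hi'
              simp only [Finset.mem_filter, Finset.mem_univ, true_and] at this
              exact hble i' this
            have := Finset.sum_le_card_nsmul _ _ b hb
            rwa [Finset.card_erase_of_mem hmem, smul_eq_mul] at this
          rw [hbu] at hsum
          have hsub : ((Finset.univ.filter (fun i' : Fin 4 => kap i' = none)).card - 1) * b
              = (Finset.univ.filter (fun i' : Fin 4 => kap i' = none)).card * b - 1 * b :=
            Nat.sub_mul _ _ _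
          rw [hsub, one_mul] at herase
          have hPb : b ≤ (Finset.univ.filter (fun i' : Fin 4 => kap i' = none)).card * b :=
            Nat.le_mul_of_pos_left b (by omega)
          set P := (Finset.univ.filter (fun i' : Fin 4 => kap i' = none)).card * b with hP
          set Se := ∑ i' ∈ (Finset.univ.filter (fun i' => kap i' = none)).erase i, bu i' with hSe
          set Sf := ∑ i' ∈ Finset.univ.filter (fun i' => kap i' = none), bu i' with hSf
          omega
        | succ a' =>
          obtain ⟨-, hstepB⟩ := ha
          obtain ⟨v, hv⟩ := hstepB i hk
          rw [hbu] at hbH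
          obtain ⟨pp, hppA, hppv⟩ := attains hbH v
          refine ⟨pp j, ?_⟩
          rw [← R_update]
          refine ih a' (Function.update kap i (some v))
            (Function.update ρ i (Function.update (ρ i) j (some (pp j))))
            bu (Function.update pt i pp) hv ?_ ?_ ?_ ?_
          · intro i' h'
            have hii : i' ≠ i := by
              rintro rfl; rw [Function.update_self] at h'; simp at h'
            rw [Function.update_of_ne hii] at h'
            rw [Function.update_of_ne hii]
            exact hun i' h'
          · intro i' h'
            have hii : i' ≠ i := by
              rintro rfl; rw [Function.update_self] at h'; simp at h'
            rw [Function.update_of_ne hii] at h'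
            exact hble i' h'
          · intro i' v' h'
            by_cases hii : i' = i
            · subst hii
              rw [Function.update_self] at h'
              injection h' with hvv
              subst hvv
              rw [Function.update_self, Function.update_self]
              refine ⟨?_, ?_⟩
              · intro jj bb hbb
                by_cases hjj : jj = j
                · subst hjj
                  rw [Function.update_self] at hbb
                  exact Option.some.inj hbb
                · rw [Function.update_of_ne hjj] at hbb
                  exact hppA jj bb hbb
              · exact hppv
            · rw [Function.update_of_ne hii] at h'
              rw [Function.update_of_ne hii, Function.update_of_ne hii]
              exact hcom i' v' h'
          · rw [filter_update_none, Finset.card_erase_of_mem hmem]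
            have hsub : ((Finset.univ.filter (fun i' : Fin 4 => kap i' = none)).card - 1) * b
                = (Finset.univ.filter (fun i' : Fin 4 => kap i' = none)).card * b - 1 * b := by
              rw [Nat.sub_mul]
            rw [hsub, one_mul]
            have hsum := Finset.add_sum_erase _ bu hmem
            rw [hbu] at hsum
            have hmul1 : (a' + 1 + 1) * b = (a' + 1) * b + b := by ring
            rw [hmul1] at hineq
            have hcard1 : 1 ≤ (Finset.univ.filter (fun i' : Fin 4 => kap i' = none)).card :=
              Finset.card_pos.mpr ⟨i, hmem⟩
            have hPb : b ≤ (Finset.univ.filter (fun i' : Fin 4 => kap i' = none)).card * b :=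
              Nat.le_mul_of_pos_left b (by omega)
            set P := (Finset.univ.filter (fun i' : Fin 4 => kap i' = none)).card * b with hP
            set Q := (a' + 1) * b with hQ
            set Se := ∑ i' ∈ (Finset.univ.filter (fun i' => kap i' = none)).erase i, bu i' with hSe
            set Sf := ∑ i' ∈ Finset.univ.filter (fun i' => kap i' = none), bu i' with hSf
            omega

end CompHard

/-! The tower of iterated compositions. -/

def It : ℕ → Type
  | 0 => Fin 4
  | (k+1) => Fin 4 × It k

instance itDecEq : ∀ k, DecidableEq (It k)
  | 0 => inferInstanceAs (DecidableEq (Fin 4))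
  | (k+1) => letI := itDecEq k; inferInstanceAs (DecidableEq (Fin 4 × It k))

instance itFin : ∀ k, Fintype (It k)
  | 0 => inferInstanceAs (Fintype (Fin 4))
  | (k+1) => letI := itFin k; inferInstanceAs (Fintype (Fin 4 × It k))

def Wt : ∀ k, Set (Bool × (It k → Option Bool))
  | 0 => baseW
  | (k+1) => compW (Wt k)

def Ft : ∀ k, (It k → Bool) → Bool
  | 0 => fB
  | (k+1) => Fcomp (Ft k)

def ItE : ∀ k, It k ≃ Fin (4 ^ (k + 1))
  | 0 => finCongr (by norm_num)
  | (k+1) => ((Equiv.refl (Fin 4)).prodCongr (ItE k)).trans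
      (finProdFinEquiv.trans (finCongr (by ring)))

lemma tTotal (k : ℕ) : ATotal (Wt k) := by
  induction k with
  | zero => exact bTotal
  | succ k ih => exact comp_total ih

lemma tUnique (k : ℕ) : AUnique (Wt k) := by
  induction k with
  | zero => exact bUnique
  | succ k ih => exact comp_unique (tTotal k) ih

lemma tComputes (k : ℕ) : Computes (Wt k) (Ft k) := by
  induction k with
  | zero => exact bComputes
  | succ k ih => exact comp_computes ih

lemma tSize (k : ℕ) : ∀ p ∈ Wt k, ASize p.2 ≤ 3 ^ (k + 1) := by
  induction k with
  | zero =>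
    intro p hp
    exact (bSize p hp).le.trans (by norm_num)
  | succ k ih =>
    intro p hp
    have h := comp_size_le ih p hp
    have h3 : 3 * 3 ^ (k + 1) = 3 ^ (k + 1 + 1) := by ring
    rw [h3] at h
    exact h

lemma tHeavy (k : ℕ) : ∀ b : Bool, ∃ p ∈ Wt k, p.1 = b ∧ 2 ^ (k + 1) ≤ ASize p.2 := by
  induction k with
  | zero =>
    intro b
    obtain ⟨p, hp, hp1, hps⟩ := bBoth b
    exact ⟨p, hp, hp1, (by norm_num : 2 ^ (0 + 1) ≤ 3).trans hps.ge⟩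
  | succ k ih =>
    intro b
    obtain ⟨q, hq, hq1, hqs⟩ := comp_heavy ih b
    refine ⟨q, hq, hq1, ?_⟩
    have h2 : 2 ^ (k + 1 + 1) = 2 * 2 ^ (k + 1) := by ring
    rw [h2]
    exact hqs

lemma tHard (k : ℕ) : Hard (Ft k) (4 ^ (k + 1) - 1) (fun _ => none) := by
  induction k with
  | zero =>
    have h : (4 : ℕ) ^ (0 + 1) - 1 = 3 := by norm_num
    rw [h]
    exact bHard
  | succ k ih =>
    have h := hardCompose (Ft k) (4 ^ (k + 1) - 1) (4 ^ (k + 1 + 1) - 1) 3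
      (fun _ => none) (fun _ _ => none) (fun _ => 4 ^ (k + 1) - 1) (fun _ _ => false)
      bHard (fun i _ => ih) (fun i _ => le_refl _) (fun i v hv => by simp at hv) ?_
    · exact h
    · have hfil : Finset.univ.filter (fun i : Fin 4 => (none : Option Bool) = none)
          = Finset.univ := by simp
      rw [hfil, Finset.sum_const, Finset.card_univ, smul_eq_mul]
      have hcard : Fintype.card (Fin 4) = 4 := by simp
      rw [hcard]
      have h4 : (4 : ℕ) ^ (k + 1 + 1) = 4 * 4 ^ (k + 1) := by ring
      have hpos : 1 ≤ (4 : ℕ) ^ (k + 1) := Nat.one_le_pow _ _ (by norm_num)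
      omega

/-! Transport along an equivalence and the final family. -/

lemma nonconst_transport {ι ι' : Type} (e : ι ≃ ι') (f : (ι → Bool) → Bool)
    (ρ : ι → Option Bool) (h : NonconstOn ρ f) :
    NonconstOn (fun i' => ρ (e.symm i')) (fun x : ι' → Bool => f (fun i => x (e i))) := by
  obtain ⟨x, y, hx, hy, hne⟩ := h
  refine ⟨fun i' => x (e.symm i'), fun i' => y (e.symm i'), ?_, ?_, ?_⟩
  · intro i' b hb; exact hx _ b hb
  · intro i' b hb; exact hy _ b hb
  · show f (fun i => x (e.symm (e i))) ≠ f (fun i => y (e.symm (e i)))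
    have hxx : (fun i => x (e.symm (e i))) = x := by
      funext i; rw [e.symm_apply_apply]
    have hyy : (fun i => y (e.symm (e i))) = y := by
      funext i; rw [e.symm_apply_apply]
    rw [hxx, hyy]; exact hne

lemma hard_transport {ι ι' : Type} [DecidableEq ι] [DecidableEq ι'] (e : ι ≃ ι')
    (f : (ι → Bool) → Bool) :
    ∀ (k : ℕ) (ρ : ι → Option Bool), Hard f k ρ →
      Hard (fun x : ι' → Bool => f (fun i => x (e i))) k (fun i' => ρ (e.symm i')) := by
  intro k
  induction k with
  | zero => intro ρ h; exact nonconst_transport e f ρ h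
  | succ k ih =>
    intro ρ h
    obtain ⟨hnc, hstep⟩ := h
    refine ⟨nonconst_transport e f ρ hnc, ?_⟩
    intro i' hi'
    obtain ⟨c, hc⟩ := hstep (e.symm i') hi'
    refine ⟨c, ?_⟩
    have heq : (fun j' => Function.update ρ (e.symm i') (some c) (e.symm j'))
        = Function.update (fun j' => ρ (e.symm j')) i' (some c) := by
      funext j'
      by_cases hj : j' = i'
      · subst hj; simp
      · have : e.symm j' ≠ e.symm i' := fun hh => hj (e.symm.injective hh)
        rw [Function.update_of_ne this, Function.update_of_ne hj]
    rw [← heq]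
    exact ih _ hc

lemma agrees_equiv {ι : Type} {mm : ℕ} (e : ι ≃ Fin mm) (v : ι → Option Bool)
    (x : Fin mm → Bool) :
    AAgrees (fun i' => v (e.symm i')) x ↔ AAgrees v (fun i => x (e i)) := by
  constructor
  · intro h i b hb
    exact h (e i) b (by simpa using hb)
  · intro h i' b hb
    have := h (e.symm i') b hb
    simpa using this

lemma wSize_equiv {ι : Type} [DecidableEq ι] [Fintype ι] {mm : ℕ} (e : ι ≃ Fin mm)
    (v : ι → Option Bool) : wSize (fun i' => v (e.symm i')) = ASize v := by
  unfold wSize ASize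
  apply Finset.card_bij' (fun a _ => e.symm a) (fun b _ => e b)
  · intro a ha
    simp only [Finset.mem_filter, Finset.mem_univ, true_and] at ha ⊢
    exact ha
  · intro b hb
    simp only [Finset.mem_filter, Finset.mem_univ, true_and] at hb ⊢
    rw [e.symm_apply_apply]; exact hb
  · intro a _; rw [e.apply_symm_apply]
  · intro b _; rw [e.symm_apply_apply]

lemma label_unique {k : ℕ} {w : It k → Option Bool}
    (h1 : (true, w) ∈ Wt k) (h0 : (false, w) ∈ Wt k) : False := by
  have h := tUnique k (fun i => (w i).getD false) (true, w) h1 (false, w) h0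
    (aagrees_getD w) (aagrees_getD w)
  simpa using h

/-- The final family. -/
def tN (N : ℕ) : ℕ := N.log2 + 1

def mN (N : ℕ) : ℕ := 4 ^ (N.log2 + 2)

def WN (N : ℕ) : Set (Fin (mN N) → Option Bool) :=
  { w | ∃ pr ∈ Wt (tN N), w = fun i' => pr.2 ((ItE (tN N)).symm i') }

lemma WN_total (N : ℕ) : TotalSP (WN N) := by
  intro x
  obtain ⟨pr, hpr, hag⟩ := tTotal (tN N) (fun i => x (ItE (tN N) i))
  exact ⟨fun i' => pr.2 ((ItE (tN N)).symm i'), ⟨pr, hpr, rfl⟩,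
    (agrees_equiv (ItE (tN N)) pr.2 x).mpr hag⟩

lemma WN_unique (N : ℕ) : UniqueSP (WN N) := by
  intro x w hw w' hw' hag hag'
  obtain ⟨pr, hpr, rfl⟩ := hw
  obtain ⟨pr', hpr', rfl⟩ := hw'
  have h := tUnique (tN N) (fun i => x (ItE (tN N) i)) pr hpr pr' hpr'
    ((agrees_equiv (ItE (tN N)) pr.2 x).mp hag)
    ((agrees_equiv (ItE (tN N)) pr'.2 x).mp hag')
  rw [h]

lemma sW_bounds (N : ℕ) :
    sW (WN N) ≤ 3 ^ (tN N + 1) ∧ 2 ^ (tN N + 1) ≤ sW (WN N) := by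
  have hub : ∀ u ∈ wSize '' (WN N), u ≤ 3 ^ (tN N + 1) := by
    rintro u ⟨w, ⟨pr, hpr, rfl⟩, rfl⟩
    exact (wSize_equiv (ItE (tN N)) pr.2).le.trans (tSize (tN N) pr hpr)
  obtain ⟨pr, hpr, -, hprS⟩ := tHeavy (tN N) true
  have hmem : wSize (fun i' => pr.2 ((ItE (tN N)).symm i')) ∈ wSize '' (WN N) :=
    Set.mem_image_of_mem _ ⟨pr, hpr, rfl⟩
  constructor
  · exact csSup_le ⟨_, hmem⟩ hub
  · have h1 : wSize (fun i' => pr.2 ((ItE (tN N)).symm i')) ≤ sW (WN N) :=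
      le_csSup ⟨3 ^ (tN N + 1), fun u hu => hub u hu⟩ hmem
    have h2 : 2 ^ (tN N + 1) ≤ wSize (fun i' => pr.2 ((ItE (tN N)).symm i')) := by
      exact hprS.trans (wSize_equiv (ItE (tN N)) pr.2).ge
    exact le_trans h2 h1

lemma DW_ge (N : ℕ) : 4 ^ (tN N + 1) ≤ DW (WN N) := by
  classical
  apply le_csInf
  · obtain ⟨T, hTd, hTs⟩ := exists_solver (WN N)
    exact ⟨mN N, T, hTd, hTs⟩
  · rintro d ⟨T, hTd, hTs⟩
    set t := tN N with ht
    set fFin : (Fin (mN N) → Bool) → Bool := fun x => Ft t (fun i => x (ItE t i)) with hfFin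
    have hHard : Hard fFin (4 ^ (t + 1) - 1) (fun _ => none) := by
      have h := hard_transport (ItE t) (Ft t) (4 ^ (t + 1) - 1) (fun _ => none) (tHard t)
      exact h
    set out : Option (Fin (mN N) → Option Bool) → Bool := fun o =>
      if (∃ u, o = some u ∧ (true, fun i => u (ItE t i)) ∈ Wt t) then true else false with hout
    have hev : ∀ x : Fin (mN N) → Bool, AAgrees (fun _ => none) x →
        out (T.eval x) = fFin x := by
      intro x _
      have htot : ∃ w ∈ WN N, Agrees w x := by
        obtain ⟨pr, hpr, hag⟩ := tTotal t (fun i => x (ItE t i))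
        exact ⟨fun i' => pr.2 ((ItE t).symm i'), ⟨pr, hpr, rfl⟩,
          (agrees_equiv (ItE t) pr.2 x).mpr hag⟩
      obtain ⟨w', hw', heval, hagw⟩ := (hTs x).1 htot
      obtain ⟨pr, hpr, hwpr⟩ := hw'
      have hagpr : AAgrees pr.2 (fun i => x (ItE t i)) := by
        rw [hwpr] at hagw
        exact (agrees_equiv (ItE t) pr.2 x).mp hagw
      have hF : fFin x = pr.1 := tComputes t pr hpr _ hagpr
      have hrec : (fun i => w' (ItE t i)) = pr.2 := by
        funext i; rw [hwpr]; simp; exact congrArg pr.2 ((ItE t).symm_apply_apply i)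
      rw [heval, hF]
      cases hpr1 : pr.1 with
      | true =>
        have hmem : (true, fun i => w' (ItE t i)) ∈ Wt t := by
          rw [hrec, ← hpr1]
          exact hpr
        have hcond : ∃ u, (some w' : Option (Fin (mN N) → Option Bool)) = some u ∧
            (true, fun i => u (ItE t i)) ∈ Wt t := ⟨w', rfl, hmem⟩
        simp only [hout]
        rw [if_pos hcond]
      | false =>
        have hcond : ¬ ∃ u, (some w' : Option (Fin (mN N) → Option Bool)) = some u ∧
            (true, fun i => u (ItE t i)) ∈ Wt t := by
          rintro ⟨u, hu, hmem⟩
          have huw : u = w' := Option.some.inj hu.symm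
          rw [huw, hrec] at hmem
          have hmem0 : (false, pr.2) ∈ Wt t := by rw [← hpr1]; exact hpr
          exact label_unique hmem hmem0
        simp only [hout]
        rw [if_neg hcond]
    have hlb := treeLB fFin out T (4 ^ (t + 1) - 1) (fun _ => none) hHard hev
    have hpos : 1 ≤ (4 : ℕ) ^ (t + 1) := Nat.one_le_pow _ _ (by norm_num)
    omega

lemma N_le_pow (N : ℕ) : N ≤ 2 ^ (tN N + 1) := by
  show N ≤ 2 ^ (N.log2 + 2)
  have h := Nat.lt_log2_self (n := N)
  have h2 : (2 : ℕ) ^ (N.log2 + 1) ≤ 2 ^ (N.log2 + 2) :=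
    Nat.pow_le_pow_right (by norm_num) (by omega)
  omega

lemma mN_poly (N : ℕ) : mN N ≤ 16 * (N + 1) ^ 2 := by
  have h2 : 2 ^ N.log2 ≤ N + 1 := by
    rcases Nat.eq_zero_or_pos N with h | h
    · subst h; rw [Nat.log2_zero]; norm_num
    · exact le_trans (Nat.log2_self_le (by omega)) (Nat.le_succ N)
  have h4 : mN N = 16 * (2 ^ N.log2) ^ 2 := by
    show 4 ^ (N.log2 + 2) = 16 * (2 ^ N.log2) ^ 2
    have e2 : 16 * (2 ^ N.log2) ^ 2 = 2 ^ (2 * N.log2 + 4) := by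
      rw [← pow_mul, show (16 : ℕ) = 2 ^ 4 from rfl, ← pow_add]
      congr 1
      ring
    rw [e2, show (4 : ℕ) = 2 ^ 2 from rfl, ← pow_mul]
    congr 1 <;> ring
  rw [h4]
  exact Nat.mul_le_mul_left 16 (Nat.pow_le_pow_left h2 2)

theorem exists_tusp_family' :
    ∃ α : ℝ, 0 < α ∧
      ∃ (m : ℕ → ℕ) (W : (N : ℕ) → Set (Fin (m N) → Option Bool)),
        (∃ a b : ℕ, ∀ N : ℕ, m N ≤ a * (N + 1) ^ b) ∧
        (∀ N : ℕ, TotalSP (W N) ∧ UniqueSP (W N)) ∧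
        ∃ N₀ : ℕ, ∀ N : ℕ, N₀ ≤ N →
          ((sW (W N) : ℝ) ^ ((1 : ℝ) + α) ≤ (DW (W N) : ℝ)) ∧ N ≤ sW (W N) := by
  refine ⟨Real.logb 3 4 - 1, ?_, mN, WN, ⟨16, 2, mN_poly⟩,
    fun N => ⟨WN_total N, WN_unique N⟩, 0, ?_⟩
  · have h1 : Real.logb 3 3 < Real.logb 3 4 :=
      Real.logb_lt_logb (by norm_num) (by norm_num) (by norm_num)
    rw [Real.logb_self_eq_one (by norm_num)] at h1
    linarith
  · intro N _
    obtain ⟨hs_le, hs_ge⟩ := sW_bounds N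
    have hd := DW_ge N
    constructor
    · have h1α : (1 : ℝ) + (Real.logb 3 4 - 1) = Real.logb 3 4 := by ring
      have h0α : (0 : ℝ) ≤ Real.logb 3 4 := Real.logb_nonneg (by norm_num) (by norm_num)
      calc (sW (WN N) : ℝ) ^ ((1 : ℝ) + (Real.logb 3 4 - 1))
          ≤ ((3 ^ (tN N + 1) : ℕ) : ℝ) ^ ((1 : ℝ) + (Real.logb 3 4 - 1)) := by
            apply Real.rpow_le_rpow (Nat.cast_nonneg _) (Nat.cast_le.mpr hs_le)
            rw [h1α]; exact h0α
        _ = ((4 ^ (tN N + 1) : ℕ) : ℝ) := by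
            rw [h1α]
            push_cast
            rw [← Real.rpow_natCast (3 : ℝ) (tN N + 1),
              ← Real.rpow_mul (by norm_num : (0:ℝ) ≤ 3), mul_comm,
              Real.rpow_mul (by norm_num : (0:ℝ) ≤ 3),
              Real.rpow_logb (by norm_num) (by norm_num) (by norm_num),
              Real.rpow_natCast]
        _ ≤ (DW (WN N) : ℝ) := Nat.cast_le.mpr hd
    · exact le_trans (N_le_pow N) hs_ge


/-- Savický, reformulated: There is a constant `α > 0` and a family of
total unique search problems `W_N ⊆ {0,1,*}^{m(N)}` with `m(N)` polynomially bounded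
in `N`, such that for all sufficiently large `N`, `D(W_N) ≥ s(W_N)^{1+α}` and
`s(W_N) ≥ N`. -/
theorem exists_tusp_family :
    ∃ α : ℝ, 0 < α ∧
      ∃ (m : ℕ → ℕ) (W : (N : ℕ) → Set (Fin (m N) → Option Bool)),
        (∃ a b : ℕ, ∀ N : ℕ, m N ≤ a * (N + 1) ^ b) ∧
        (∀ N : ℕ, TotalSP (W N) ∧ UniqueSP (W N)) ∧
        ∃ N₀ : ℕ, ∀ N : ℕ, N₀ ≤ N →
          ((sW (W N) : ℝ) ^ ((1 : ℝ) + α) ≤ (DW (W N) : ℝ)) ∧ N ≤ sW (W N) := by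
  exact exists_tusp_family'
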